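/- Let m ≥ 1 and l ≥ 4 be integers, A = {m-1, 2m+1}, B = {m-1, 3m+1} ⊆ ℤ. If x ∈ (l-4)A + B - (l-4)m and x < 2m+5-l, then x = m+3-l. -/
import Mathlib


/-- The n-fold Minkowski sum of a set A ⊆ ℤ with itself (0-fold sum is {0}). -/
def minkowskiPow (n : ℕ) (A : Set ℤ) : Set ℤ :=
  {x | ∃ f : Fin n → ℤ, (∀ i, f i ∈ A) ∧ x = ∑ i, f i}

lemma minkowskiPow_pair (n : ℕ) (a d y : ℤ)
    (hy : y ∈ minkowskiPow n ({a, a + d} : Set ℤ)) :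
    ∃ k : ℕ, y = n * a + k * d := by
  classical
  obtain ⟨f, hf, rfl⟩ := hy
  refine ⟨(Finset.univ.filter (fun i => f i ≠ a)).card, ?_⟩
  have h1 : ∀ i, f i = a + if f i ≠ a then d else 0 := by
    intro i
    have h := hf i
    simp only [Set.mem_insert_iff, Set.mem_singleton_iff] at h
    rcases h with h | h
    · simp [h]
    · by_cases ha : f i = a
      · simp [ha]
      · simp only [ne_eq, ha, not_false_eq_true, if_true]; exact h
  calc ∑ i, f i = ∑ i, (a + if f i ≠ a then d else 0) := by
        exact Finset.sum_congr rfl fun i _ => h1 i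
    _ = n * a + (Finset.univ.filter (fun i => f i ≠ a)).card * d := by
        rw [Finset.sum_add_distrib, Finset.sum_const, Finset.sum_ite, Finset.sum_const,
          Finset.sum_const]
        simp [mul_comm]

/-- Gap lemma: for m ≥ 1, l ≥ 4, A = {m-1, 2m+1}, B = {m-1, 3m+1}, if
x ∈ (l-4)A + B - (l-4)m and x < 2m+5-l, then x = m+3-l. -/
theorem minkowski_gap (m l : ℕ) (hm : 1 ≤ m) (hl : 4 ≤ l) (x : ℤ)
    (hx : ∃ y ∈ minkowskiPow (l - 4) ({(m : ℤ) - 1, 2 * (m : ℤ) + 1} : Set ℤ),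
      ∃ b ∈ ({(m : ℤ) - 1, 3 * (m : ℤ) + 1} : Set ℤ), x = y + b - ((l : ℤ) - 4) * m)
    (hlt : x < 2 * (m : ℤ) + 5 - l) :
    x = (m : ℤ) + 3 - l := by
  obtain ⟨y, hy, b, hb, rfl⟩ := hx
  have h2 : (2 * (m : ℤ) + 1) = ((m : ℤ) - 1) + ((m : ℤ) + 2) := by ring
  rw [h2] at hy
  obtain ⟨k, rfl⟩ := minkowskiPow_pair _ _ _ _ hy
  have hn : ((l - 4 : ℕ) : ℤ) = (l : ℤ) - 4 := by
    have := Nat.cast_sub hl (R := ℤ); simpa using this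
  have hk0 : (0 : ℤ) ≤ (k : ℤ) := Int.natCast_nonneg k
  have hm' : (1 : ℤ) ≤ (m : ℤ) := by exact_mod_cast hm
  rw [hn] at hlt ⊢
  rcases hb with rfl | rfl
  · have hk1 : (k : ℤ) < 1 := by nlinarith
    have : (k : ℤ) = 0 := by omega
    rw [this]; ring
  · exfalso; nlinarith
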